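/- Fix real numbers x, l̂ < û, and γ ∈ [0,1); set q = γ/(1-γ), c = (l̂ + û)/2, and I(λ) = û - l̂ + 2λ. Then the function f : [0, ∞) → ℝ given by f(λ) = max(0, (2(1+q)/I(λ))·|x - c| - q) is convex on [0, ∞). -/

import Mathlib

/-- The per-coordinate surrogate loss
`λ ↦ [ (2(1+q)/I(λ)) |x - c| - q ]₊` with `q = γ/(1-γ)`, `c = (l̂ + û)/2`,
`I(λ) = û - l̂ + 2λ`, is convex on `[0, ∞)` whenever `l̂ < û` and `γ ∈ [0, 1)`. -/
theorem surrogate_loss_coord_convexOn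
    (x lhat uhat γ : ℝ) (hlu : lhat < uhat) (hγ0 : 0 ≤ γ) (hγ1 : γ < 1) :
    ConvexOn ℝ (Set.Ici (0 : ℝ))
      (fun lam : ℝ =>
        max 0 ((2 * (1 + γ / (1 - γ))) / (uhat - lhat + 2 * lam) *
          |x - (lhat + uhat) / 2| - γ / (1 - γ))) := by
  set q : ℝ := γ / (1 - γ) with hq
  have hq0 : 0 ≤ q := div_nonneg hγ0 (by linarith)
  set A : ℝ := 2 * (1 + q) * |x - (lhat + uhat) / 2| with hA
  have hA0 : 0 ≤ A := by positivity
  -- inverse is convex on (0,∞)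
  have hinv : ConvexOn ℝ (Set.Ioi (0:ℝ)) (fun t : ℝ => t⁻¹) := by
    have := convexOn_zpow (𝕜 := ℝ) (-1)
    simpa [zpow_neg_one] using this
  -- compose with affine map lam ↦ (uhat - lhat) + 2 * lam
  have hinv2 : ConvexOn ℝ (Set.Ici (0:ℝ))
      (fun lam : ℝ => (uhat - lhat + 2 * lam)⁻¹) := by
    have hcomp := hinv.comp_affineMap
      (AffineMap.lineMap (uhat - lhat) (uhat - lhat + 2) : ℝ →ᵃ[ℝ] ℝ)
    have heq : (fun lam : ℝ => (uhat - lhat + 2 * lam)⁻¹) =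
        ((fun t : ℝ => t⁻¹) ∘
          (AffineMap.lineMap (uhat - lhat) (uhat - lhat + 2) : ℝ →ᵃ[ℝ] ℝ)) := by
      funext lam
      simp [AffineMap.lineMap_apply]
      ring_nf
    rw [heq]
    refine hcomp.subset (fun lam hlam => ?_) (convex_Ici 0)
    simp only [Set.mem_preimage, AffineMap.lineMap_apply, vsub_eq_sub, vadd_eq_add,
      smul_eq_mul, Set.mem_Ioi]
    have : (0:ℝ) ≤ lam := hlam
    nlinarith
  have hmain : ConvexOn ℝ (Set.Ici (0:ℝ))
      (fun lam : ℝ => A * (uhat - lhat + 2 * lam)⁻¹ - q) := by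
    have h1 := hinv2.smul hA0
    have h2 : ConcaveOn ℝ (Set.Ici (0:ℝ)) (fun _ : ℝ => q) := concaveOn_const q (convex_Ici 0)
    have := (h1.sub h2)
    simpa [smul_eq_mul, Pi.sub_def] using this
  have hfinal := (convexOn_const (0:ℝ) (convex_Ici (0:ℝ))).sup hmain
  have heq : (fun lam : ℝ =>
        max 0 ((2 * (1 + q)) / (uhat - lhat + 2 * lam) * |x - (lhat + uhat) / 2| - q)) =
      ((fun _ : ℝ => (0:ℝ)) ⊔ (fun lam : ℝ => A * (uhat - lhat + 2 * lam)⁻¹ - q)) := by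
    funext lam
    simp only [Pi.sup_apply]
    congr 1
    rw [hA]
    ring
  rw [heq]
  exact hfinal
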